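/- Let $\Psi$ be an Orlicz function such that the Hoffmann-Jørgensen inequality $\|\sum_{i=1}^N X_i\|_\Psi\le D(\|\sum_{i=1}^N X_i\|_1+\|\max_{i\le N}|X_i|\|_\Psi)$ holds with a fixed constant $D$ for all sequences of i.i.d., symmetric, real-valued, bounded random variables. Then $\Psi$ satisfies the condition (HJ): there exists $K>0$ such that $\psi(su)\le K(s\ln(1+s)+s\psi(u))$ for all $s,u\ge K$, where $\psi=\log(1+\Psi)$. -/

import Mathlib

open MeasureTheory ProbabilityTheory
open Function Set
open scoped ENNReal NNReal
set_option maxHeartbeats 1000000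

/-- An Orlicz function: convex, strictly increasing on `[0,∞)`, vanishing at `0`. -/
def IsOrlicz (Ψ : ℝ → ℝ) : Prop :=
  ConvexOn ℝ (Set.Ici 0) Ψ ∧ StrictMonoOn Ψ (Set.Ici 0) ∧ Ψ 0 = 0

/-- The associated exponent `ψ` with `Ψ = e^ψ - 1`. -/
noncomputable def orliczExp (Ψ : ℝ → ℝ) (x : ℝ) : ℝ := Real.log (1 + Ψ x)

/-- The Orlicz (Luxemburg) norm of a Banach-space-valued random variable. -/
noncomputable def orliczNorm {Ω : Type*} [MeasurableSpace Ω] (μ : Measure Ω)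
    (Ψ : ℝ → ℝ) {F : Type*} [NormedAddCommGroup F] (X : Ω → F) : ℝ :=
  sInf {a : ℝ | 0 < a ∧ ∫⁻ ω, ENNReal.ofReal (Ψ (‖X ω‖ / a)) ∂μ ≤ 1}

/-- `X` has finite Orlicz norm. -/
def OrliczFinite {Ω : Type*} [MeasurableSpace Ω] (μ : Measure Ω)
    (Ψ : ℝ → ℝ) {F : Type*} [NormedAddCommGroup F] (X : Ω → F) : Prop :=
  ∃ a : ℝ, 0 < a ∧ ∫⁻ ω, ENNReal.ofReal (Ψ (‖X ω‖ / a)) ∂μ ≤ 1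

/-- Condition (HJ): `ψ(su) ≤ K (s ln(1+s) + s ψ(u))` for all `s, u ≥ K`. -/
def HJCond (Ψ : ℝ → ℝ) : Prop :=
  ∃ K > (0:ℝ), ∀ s u : ℝ, K ≤ s → K ≤ u →
    orliczExp Ψ (s * u) ≤ K * (s * Real.log (1 + s) + s * orliczExp Ψ u)

/-- A Rademacher (symmetric ±1) random variable. -/
def IsRademacher {Ω : Type*} [MeasurableSpace Ω] (μ : Measure Ω) (ε : Ω → ℝ) : Prop :=
  μ {ω | ε ω = 1} = 1/2 ∧ μ {ω | ε ω = -1} = 1/2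


section Infra
variable {ι : Type} [Fintype ι] {α : Type} [MeasurableSpace α]
  (μ₀ : Measure α) [IsProbabilityMeasure μ₀]

lemma pi_eval_preimage (i : ι) (t : Set α) :
    Measure.pi (fun _ : ι => μ₀) (eval i ⁻¹' t) = μ₀ t := by
  classical
  rw [Set.eval_preimage, Measure.pi_pi]
  have : ∀ j, μ₀ (Function.update (fun _ : ι => (univ : Set α)) i t j)
      = if j = i then μ₀ t else 1 := by
    intro j
    rw [Function.update_apply]
    split_ifs <;> simp
  rw [Finset.prod_congr rfl (fun j _ => this j)]
  simp

lemma iIndepFun_eval :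
    iIndepFun (fun i (ω : ι → α) => ω i)
      (Measure.pi (fun _ : ι => μ₀)) := by
  classical
  rw [iIndepFun_iff_measure_inter_preimage_eq_mul]
  intro S sets _
  have h1 : (⋂ i ∈ S, (fun ω : ι → α => ω i) ⁻¹' sets i)
      = Set.pi univ (fun i => if i ∈ S then sets i else univ) := by
    ext ω
    simp only [Set.mem_iInter, Set.mem_preimage, Set.mem_pi, Set.mem_univ, true_implies]
    constructor
    · intro h i; split_ifs with hi
      · exact h i hi
      · trivial
    · intro h i hi; have := h i; rwa [if_pos hi] at this
  rw [h1, Measure.pi_pi]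
  have h2 : ∀ j ∈ Finset.univ, μ₀ (if j ∈ S then sets j else univ)
      = if j ∈ S then μ₀ (sets j) else 1 := by
    intro j _; split_ifs <;> simp
  rw [Finset.prod_congr rfl h2, Finset.prod_ite_mem, Finset.univ_inter]
  refine Finset.prod_congr rfl fun j hj => ?_
  rw [pi_eval_preimage]

lemma identDistrib_eval (i j : ι) :
    IdentDistrib (fun ω : ι → α => ω i) (fun ω : ι → α => ω j)
      (Measure.pi (fun _ : ι => μ₀)) (Measure.pi (fun _ : ι => μ₀)) := by
  refine ⟨(measurable_pi_apply i).aemeasurable, (measurable_pi_apply j).aemeasurable, ?_⟩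
  ext t ht
  rw [Measure.map_apply (measurable_pi_apply i) ht,
    Measure.map_apply (measurable_pi_apply j) ht, pi_eval_preimage, pi_eval_preimage]

end Infra

noncomputable def triM (p : ℝ) : Measure (Fin 3) :=
  ENNReal.ofReal (1-p) • Measure.dirac 0 + ENNReal.ofReal (p/2) • Measure.dirac 1
    + ENNReal.ofReal (p/2) • Measure.dirac 2

lemma triM_apply (p : ℝ) (s : Set (Fin 3)) :
    triM p s = (ENNReal.ofReal (1-p)) * s.indicator 1 0
      + (ENNReal.ofReal (p/2)) * s.indicator 1 1 + (ENNReal.ofReal (p/2)) * s.indicator 1 2 := by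
  have hs : MeasurableSet s := .of_discrete
  simp [triM, Measure.dirac_apply' _ hs]

theorem triM_prob (p : ℝ) (hp0 : 0 ≤ p) (hp1 : p ≤ 1) : IsProbabilityMeasure (triM p) := by
  constructor
  rw [triM_apply]
  simp only [Set.indicator_univ, Pi.one_apply, mul_one]
  rw [← ENNReal.ofReal_add (by linarith) (by linarith), ← ENNReal.ofReal_add (by linarith) (by linarith)]
  have : 1 - p + p / 2 + p / 2 = 1 := by ring
  rw [this, ENNReal.ofReal_one]

lemma triM_ne_zero (p : ℝ) (hp0 : 0 ≤ p) : triM p ({0}ᶜ : Set (Fin 3)) = ENNReal.ofReal p := by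
  rw [triM_apply]
  have h0 : (0:Fin 3) ∉ ({0}ᶜ : Set (Fin 3)) := by simp
  have h1 : (1:Fin 3) ∈ ({0}ᶜ : Set (Fin 3)) := by simp
  have h2 : (2:Fin 3) ∈ ({0}ᶜ : Set (Fin 3)) := by simp
  rw [Set.indicator_of_notMem h0, Set.indicator_of_mem h1, Set.indicator_of_mem h2]
  simp only [Pi.one_apply, mul_one, mul_zero, zero_add]
  rw [← ENNReal.ofReal_add (by linarith) (by linarith)]
  norm_num [ENNReal.ofReal_one]

lemma triM_one (p : ℝ) (hp1 : p ≤ 1) : triM p ({1} : Set (Fin 3)) = ENNReal.ofReal (p/2) := by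
  rw [triM_apply]
  have h0 : (0:Fin 3) ∉ ({1} : Set (Fin 3)) := by simp
  have h1 : (1:Fin 3) ∈ ({1} : Set (Fin 3)) := by simp
  have h2 : (2:Fin 3) ∉ ({1} : Set (Fin 3)) := by decide
  rw [Set.indicator_of_notMem h0, Set.indicator_of_mem h1, Set.indicator_of_notMem h2]
  simp

-- pushforward under f := ![0, u, -u]
lemma triM_map (p u : ℝ) (hp0 : 0 ≤ p) (hp1 : p ≤ 1) :
    Measure.map (![0, u, -u]) (triM p)
      = ENNReal.ofReal (1-p) • Measure.dirac (0:ℝ) + ENNReal.ofReal (p/2) • Measure.dirac u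
        + ENNReal.ofReal (p/2) • Measure.dirac (-u) := by
  have hf : Measurable (![0, u, -u] : Fin 3 → ℝ) := measurable_of_countable _
  rw [triM, Measure.map_add _ _ hf, Measure.map_add _ _ hf, Measure.map_smul,
    Measure.map_smul, Measure.map_smul, Measure.map_dirac' hf, Measure.map_dirac' hf,
    Measure.map_dirac' hf]
  norm_num
  rfl

lemma triM_map_neg (p u : ℝ) (hp0 : 0 ≤ p) (hp1 : p ≤ 1) :
    Measure.map (fun x : ℝ => -x) (Measure.map (![0, u, -u]) (triM p))
      = Measure.map (![0, u, -u]) (triM p) := by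
  rw [triM_map p u hp0 hp1]
  have hn : Measurable (fun x : ℝ => -x) := measurable_neg
  rw [Measure.map_add _ _ hn, Measure.map_add _ _ hn, Measure.map_smul, Measure.map_smul,
    Measure.map_smul, Measure.map_dirac' hn, Measure.map_dirac' hn, Measure.map_dirac' hn]
  simp only [neg_zero, neg_neg]
  abel


namespace IsOrlicz
variable {Ψ : ℝ → ℝ}

lemma mono (h : IsOrlicz Ψ) : MonotoneOn Ψ (Set.Ici 0) := h.2.1.monotoneOn

lemma nonneg (h : IsOrlicz Ψ) {x : ℝ} (hx : 0 ≤ x) : 0 ≤ Ψ x := by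
  have := h.mono (Set.self_mem_Ici) hx hx
  rwa [h.2.2] at this

lemma one_pos (h : IsOrlicz Ψ) : 0 < Ψ 1 := by
  have := h.2.1 (Set.self_mem_Ici) (by norm_num : (1:ℝ) ∈ Set.Ici (0:ℝ)) (by norm_num)
  rwa [h.2.2] at this

lemma lin_le (h : IsOrlicz Ψ) {u : ℝ} (hu : 1 ≤ u) : Ψ 1 * u ≤ Ψ u := by
  have hu0 : 0 < u := by linarith
  have hc := h.1.2 (Set.self_mem_Ici) (le_of_lt hu0 : (0:ℝ) ≤ u)
    (by rw [sub_nonneg, div_le_one hu0]; exact hu : (0:ℝ) ≤ 1 - 1/u) (by positivity : (0:ℝ) ≤ 1/u) (by ring)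
  simp only [smul_eq_mul, mul_zero, zero_add, h.2.2, mul_zero] at hc
  have h1 : (1/u) * u = 1 := by field_simp
  rw [h1] at hc
  calc Ψ 1 * u ≤ (1/u * Ψ u) * u := by nlinarith
    _ = Ψ u := by field_simp

lemma small_le (h : IsOrlicz Ψ) {x : ℝ} (hx0 : 0 ≤ x) (hx1 : x ≤ 1) : Ψ x ≤ x * Ψ 1 := by
  have hc := h.1.2 (Set.self_mem_Ici) (by norm_num : (1:ℝ) ∈ Set.Ici (0:ℝ))
    (by linarith : (0:ℝ) ≤ 1 - x) hx0 (by ring)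
  simp only [smul_eq_mul, mul_zero, zero_add, mul_one, h.2.2] at hc
  linarith [hc]

end IsOrlicz

lemma key {Ψ : ℝ → ℝ} (hΨ : IsOrlicz Ψ) (D : ℝ)
    (hHJineq : ∀ (Ω : Type) (_ : MeasurableSpace Ω) (μ : Measure Ω),
      IsProbabilityMeasure μ →
      ∀ (N : ℕ) (X : Fin N → Ω → ℝ),
        (∀ i, Measurable (X i)) →
        iIndepFun X μ →
        (∀ i j, IdentDistrib (X i) (X j) μ μ) →
        (∀ i, IdentDistrib (X i) (fun ω => -(X i ω)) μ μ) →
        (∃ B : ℝ, ∀ i ω, |X i ω| ≤ B) →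
        orliczNorm μ Ψ (fun ω => ∑ i, X i ω) ≤
          D * ((∫ ω, |∑ i, X i ω| ∂μ) + orliczNorm μ Ψ (fun ω => ⨆ i, |X i ω|)))
    (m : ℕ) (hm : 1 ≤ m) (u : ℝ) (hu : 1 ≤ u) (hΨu : 1 ≤ Ψ u) :
    Ψ (m * u / (|D| * (1/Ψ 1 + 1) + 1)) ≤ (2 * m * Ψ u)^m := by
  classical
  have hΨ10 : 0 < Ψ 1 := hΨ.one_pos
  have hΨu0 : 0 < Ψ u := lt_of_lt_of_le one_pos hΨu
  have hu0 : (0:ℝ) < u := lt_of_lt_of_le one_pos hu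
  have hm0 : (0:ℝ) < (m:ℝ) := by exact_mod_cast hm
  set p : ℝ := 1/((m:ℝ) * Ψ u) with hp_def
  have hp0 : 0 < p := by positivity
  have hm1 : (1:ℝ) ≤ (m:ℝ) := by exact_mod_cast hm
  have hmΨu : (1:ℝ) ≤ (m:ℝ) * Ψ u := by nlinarith
  have hp1 : p ≤ 1 := by rw [hp_def, div_le_one (by positivity)]; exact hmΨu
  haveI : IsProbabilityMeasure (triM p) := triM_prob p hp0.le hp1
  set μ : Measure (Fin m → Fin 3) := Measure.pi (fun _ => triM p) with hμ_def
  haveI : IsProbabilityMeasure μ := by rw [hμ_def]; infer_instance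
  set f : Fin 3 → ℝ := ![0, u, -u] with hf_def
  set X : Fin m → (Fin m → Fin 3) → ℝ := fun i ω => f (ω i) with hX_def
  have hfmeas : Measurable f := measurable_of_countable f
  have hXmeas : ∀ i, Measurable (X i) := fun i => hfmeas.comp (measurable_pi_apply i)
  have hfabs : ∀ j : Fin 3, |f j| = if j = 0 then 0 else u := by
    intro j
    fin_cases j <;> simp [hf_def, abs_of_nonneg hu0.le]
  have hfbd : ∀ j : Fin 3, |f j| ≤ u := by
    intro j; rw [hfabs j]; split_ifs <;> linarith
  have hindep : iIndepFun X μ :=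
    (iIndepFun_eval (triM p)).comp (fun _ => f) (fun _ => hfmeas)
  have hident : ∀ i j, IdentDistrib (X i) (X j) μ μ :=
    fun i j => (identDistrib_eval (triM p) i j).comp hfmeas
  have hmapX : ∀ i, Measure.map (X i) μ = Measure.map f (triM p) := by
    intro i
    have h1 : Measure.map (fun ω : Fin m → Fin 3 => ω i) μ = triM p := by
      ext t ht
      rw [Measure.map_apply (measurable_pi_apply i) ht, hμ_def, pi_eval_preimage]
    rw [← h1, Measure.map_map hfmeas (measurable_pi_apply i)]
    rfl
  have hsymm : ∀ i, IdentDistrib (X i) (fun ω => -(X i ω)) μ μ := by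
    intro i
    refine ⟨(hXmeas i).aemeasurable, ((hXmeas i).neg).aemeasurable, ?_⟩
    have h2 : (fun ω => -(X i ω)) = (fun x : ℝ => -x) ∘ (X i) := rfl
    rw [h2, ← Measure.map_map measurable_neg (hXmeas i), hmapX i,
      triM_map_neg p u hp0.le hp1]
  have hbdd : ∃ B : ℝ, ∀ i ω, |X i ω| ≤ B := ⟨u, fun i ω => hfbd (ω i)⟩
  have hHJ' := hHJineq _ inferInstance μ inferInstance m X hXmeas hindep hident hsymm hbdd
  -- bound on L¹ norm of the sum
  have habs : ∀ (i : Fin m) ω, |X i ω|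
      = Set.indicator ((fun ω : Fin m → Fin 3 => ω i) ⁻¹' ({0}ᶜ)) (fun _ => u) ω := by
    intro i ω
    rw [hX_def]; simp only []
    rw [hfabs (ω i), Set.indicator_apply]
    simp only [Set.mem_preimage, Set.mem_compl_iff, Set.mem_singleton_iff]
    split_ifs with h1 h2 h2 <;> tauto
  have hI3 : ∀ i : Fin m, ∫ ω, |X i ω| ∂μ = p * u := by
    intro i
    simp_rw [habs]
    rw [integral_indicator_const u MeasurableSet.of_discrete]
    rw [measureReal_def, hμ_def, pi_eval_preimage, triM_ne_zero p hp0.le, ENNReal.toReal_ofReal hp0.le]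
    simp [smul_eq_mul]
  have hI1 : ∫ ω, |∑ i, X i ω| ∂μ ≤ 1/Ψ 1 := by
    have step1 : ∫ ω, |∑ i, X i ω| ∂μ ≤ ∫ ω, ∑ i, |X i ω| ∂μ :=
      integral_mono (Integrable.of_finite) (Integrable.of_finite)
        (fun ω => Finset.abs_sum_le_sum_abs _ _)
    have step2 : ∫ ω, ∑ i, |X i ω| ∂μ = ∑ i : Fin m, ∫ ω, |X i ω| ∂μ :=
      integral_finset_sum _ (fun i _ => Integrable.of_finite)
    have step3 : (∑ i : Fin m, ∫ ω, |X i ω| ∂μ) = u / Ψ u := by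
      simp_rw [hI3]
      rw [Finset.sum_const, Finset.card_univ, Fintype.card_fin, nsmul_eq_mul, hp_def]
      field_simp
    have step4 : u / Ψ u ≤ 1 / Ψ 1 := by
      rw [div_le_div_iff₀ hΨu0 hΨ10]
      nlinarith [hΨ.lin_le hu]
    linarith [step1, step2.le, step2.ge]
  have hI1' : 0 ≤ ∫ ω, |∑ i, X i ω| ∂μ := integral_nonneg (fun ω => abs_nonneg _)
  -- bound on Orlicz norm of the max
  haveI : Nonempty (Fin m) := ⟨⟨0, hm⟩⟩
  have hsupmem : (1:ℝ) ∈ {a : ℝ | 0 < a ∧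
      ∫⁻ ω, ENNReal.ofReal (Ψ (‖⨆ i, |X i ω|‖ / a)) ∂μ ≤ 1} := by
    refine ⟨one_pos, ?_⟩
    have hptw : ∀ ω, ENNReal.ofReal (Ψ (‖⨆ i, |X i ω|‖ / 1))
        ≤ Set.indicator (⋃ i : Fin m, (fun ω : Fin m → Fin 3 => ω i) ⁻¹' ({0}ᶜ))
          (fun _ => ENNReal.ofReal (Ψ u)) ω := by
      intro ω
      by_cases hω : ∀ i, ω i = 0
      · have hz : ∀ i : Fin m, |X i ω| = 0 := by
          intro i; rw [habs i ω, Set.indicator_apply]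
          simp [hω i]
        have hsup : (⨆ i, |X i ω|) = 0 := by
          simp_rw [hz]; exact ciSup_const
        rw [hsup]
        simp [hΨ.2.2]
      · push_neg at hω
        obtain ⟨i₀, hi₀⟩ := hω
        have hmem : ω ∈ ⋃ i : Fin m, (fun ω : Fin m → Fin 3 => ω i) ⁻¹' ({0}ᶜ) := by
          exact Set.mem_iUnion.2 ⟨i₀, by simpa using hi₀⟩
        rw [Set.indicator_of_mem hmem]
        have hub : (⨆ i, |X i ω|) ≤ u := ciSup_le (fun i => hfbd (ω i))
        have hlb : 0 ≤ (⨆ i, |X i ω|) :=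
          le_ciSup_of_le (Set.Finite.bddAbove (Set.finite_range _)) i₀ (abs_nonneg _)
        rw [Real.norm_eq_abs, abs_of_nonneg hlb, div_one]
        exact ENNReal.ofReal_le_ofReal (hΨ.mono hlb (le_trans hlb hub) hub)
    calc ∫⁻ ω, ENNReal.ofReal (Ψ (‖⨆ i, |X i ω|‖ / 1)) ∂μ
        ≤ ∫⁻ ω, Set.indicator (⋃ i : Fin m, (fun ω : Fin m → Fin 3 => ω i) ⁻¹' ({0}ᶜ))
          (fun _ => ENNReal.ofReal (Ψ u)) ω ∂μ := lintegral_mono hptw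
      _ = ENNReal.ofReal (Ψ u) * μ (⋃ i : Fin m, (fun ω : Fin m → Fin 3 => ω i) ⁻¹' ({0}ᶜ)) := by
          rw [lintegral_indicator_const MeasurableSet.of_discrete]
      _ ≤ ENNReal.ofReal (Ψ u) * ((m : ℝ≥0∞) * ENNReal.ofReal p) := by
          gcongr
          calc μ (⋃ i : Fin m, (fun ω : Fin m → Fin 3 => ω i) ⁻¹' ({0}ᶜ))
              ≤ ∑ i : Fin m, μ ((fun ω : Fin m → Fin 3 => ω i) ⁻¹' ({0}ᶜ)) :=
                measure_iUnion_fintype_le _ _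
            _ = (m : ℝ≥0∞) * ENNReal.ofReal p := by
                have : ∀ i : Fin m, μ ((fun ω : Fin m → Fin 3 => ω i) ⁻¹' ({0}ᶜ))
                    = ENNReal.ofReal p := by
                  intro i; rw [hμ_def, pi_eval_preimage, triM_ne_zero p hp0.le]
                simp_rw [this]
                rw [Finset.sum_const, Finset.card_univ, Fintype.card_fin, nsmul_eq_mul]
      _ ≤ 1 := by
          rw [← ENNReal.ofReal_natCast, ← ENNReal.ofReal_mul (by positivity),
            ← ENNReal.ofReal_mul (hΨ.nonneg hu0.le)]
          rw [hp_def]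
          have : Ψ u * ((m:ℝ) * (1/((m:ℝ) * Ψ u))) = 1 := by field_simp
          rw [this]
          simp
  have hsup_le : orliczNorm μ Ψ (fun ω => ⨆ i, |X i ω|) ≤ 1 := by
    rw [orliczNorm]
    exact csInf_le ⟨0, fun b hb => hb.1.le⟩ hsupmem
  have hsup0 : 0 ≤ orliczNorm μ Ψ (fun ω => ⨆ i, |X i ω|) :=
    Real.sInf_nonneg (fun b hb => hb.1.le)
  -- combine: orliczNorm of sum ≤ R
  set R : ℝ := |D| * (1/Ψ 1 + 1) with hR_def
  have hR0 : 0 ≤ R := by positivity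
  have hnorm_le : orliczNorm μ Ψ (fun ω => ∑ i, X i ω) ≤ R := by
    have h1 : (∫ ω, |∑ i, X i ω| ∂μ) + orliczNorm μ Ψ (fun ω => ⨆ i, |X i ω|)
        ≤ 1/Ψ 1 + 1 := by linarith
    have h2 : 0 ≤ (∫ ω, |∑ i, X i ω| ∂μ) + orliczNorm μ Ψ (fun ω => ⨆ i, |X i ω|) := by
      linarith
    calc orliczNorm μ Ψ (fun ω => ∑ i, X i ω)
        ≤ D * ((∫ ω, |∑ i, X i ω| ∂μ) + orliczNorm μ Ψ (fun ω => ⨆ i, |X i ω|)) := hHJ'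
      _ ≤ |D| * ((∫ ω, |∑ i, X i ω| ∂μ) + orliczNorm μ Ψ (fun ω => ⨆ i, |X i ω|)) :=
          mul_le_mul_of_nonneg_right (le_abs_self D) h2
      _ ≤ |D| * (1/Ψ 1 + 1) := mul_le_mul_of_nonneg_left h1 (abs_nonneg D)
  -- the admissible set for the sum is nonempty
  set x₁ : ℝ := min 1 (1/Ψ 1) with hx₁_def
  have hx₁0 : 0 < x₁ := lt_min one_pos (by positivity)
  have hΨx₁ : Ψ x₁ ≤ 1 := by
    have h1 : Ψ x₁ ≤ x₁ * Ψ 1 := hΨ.small_le hx₁0.le (min_le_left _ _)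
    have h2 : x₁ * Ψ 1 ≤ (1/Ψ 1) * Ψ 1 :=
      mul_le_mul_of_nonneg_right (min_le_right _ _) hΨ10.le
    have h3 : (1/Ψ 1) * Ψ 1 = 1 := by field_simp
    linarith
  have hsumbd : ∀ ω, |∑ i, X i ω| ≤ (m:ℝ) * u := by
    intro ω
    calc |∑ i, X i ω| ≤ ∑ i, |X i ω| := Finset.abs_sum_le_sum_abs _ _
      _ ≤ ∑ _i : Fin m, u := Finset.sum_le_sum (fun i _ => hfbd (ω i))
      _ = (m:ℝ) * u := by
          rw [Finset.sum_const, Finset.card_univ, Fintype.card_fin, nsmul_eq_mul]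
  set S : Set ℝ := {a : ℝ | 0 < a ∧
      ∫⁻ ω, ENNReal.ofReal (Ψ (‖∑ i, X i ω‖ / a)) ∂μ ≤ 1} with hS_def
  have hSne : S.Nonempty := by
    refine ⟨(m:ℝ) * u / x₁, by positivity, ?_⟩
    have hptw : ∀ ω, ENNReal.ofReal (Ψ (‖∑ i, X i ω‖ / ((m:ℝ) * u / x₁))) ≤ 1 := by
      intro ω
      have ha0 : 0 < (m:ℝ) * u / x₁ := by positivity
      have h1 : ‖∑ i, X i ω‖ / ((m:ℝ) * u / x₁) ≤ x₁ := by
        rw [Real.norm_eq_abs, div_le_iff₀ ha0]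
        calc |∑ i, X i ω| ≤ (m:ℝ) * u := hsumbd ω
          _ = x₁ * ((m:ℝ) * u / x₁) := by field_simp
      have h2 : 0 ≤ ‖∑ i, X i ω‖ / ((m:ℝ) * u / x₁) := by positivity
      have h3 : Ψ (‖∑ i, X i ω‖ / ((m:ℝ) * u / x₁)) ≤ 1 :=
        le_trans (hΨ.mono h2 (le_trans h2 h1) h1) hΨx₁
      calc ENNReal.ofReal (Ψ (‖∑ i, X i ω‖ / ((m:ℝ) * u / x₁))) ≤ ENNReal.ofReal 1 :=
            ENNReal.ofReal_le_ofReal h3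
        _ = 1 := ENNReal.ofReal_one
    calc ∫⁻ ω, ENNReal.ofReal (Ψ (‖∑ i, X i ω‖ / ((m:ℝ) * u / x₁))) ∂μ
        ≤ ∫⁻ _ω, 1 ∂μ := lintegral_mono hptw
      _ = 1 := by rw [lintegral_one, measure_univ]
  -- extract an admissible a < R + 1
  have hinf_lt : sInf S < R + 1 := lt_of_le_of_lt hnorm_le (lt_add_one R)
  obtain ⟨a, haS, haR⟩ := exists_lt_of_csInf_lt hSne hinf_lt
  obtain ⟨ha0, haint⟩ := haS
  -- lower bound via the all-ones event
  have hE : μ (Set.pi Set.univ (fun _ : Fin m => ({1} : Set (Fin 3))))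
      = (ENNReal.ofReal (p/2))^m := by
    rw [hμ_def, Measure.pi_pi]
    simp_rw [triM_one p hp1]
    rw [Finset.prod_const, Finset.card_univ, Fintype.card_fin]
  have hlow : ENNReal.ofReal (Ψ ((m:ℝ)*u/a)) * (ENNReal.ofReal (p/2))^m ≤ 1 := by
    refine le_trans ?_ haint
    rw [← hE, ← lintegral_indicator_const MeasurableSet.of_discrete]
    refine lintegral_mono (fun ω => ?_)
    rw [Set.indicator_apply]
    split_ifs with hω
    · have hω' : ∀ i, ω i = 1 := fun i => hω i (Set.mem_univ i)
      have hXω : ∀ i : Fin m, X i ω = u := by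
        intro i; rw [hX_def]; simp only []; rw [hω' i]; simp [hf_def]
      have hsum : (∑ i, X i ω) = (m:ℝ) * u := by
        simp_rw [hXω]
        rw [Finset.sum_const, Finset.card_univ, Fintype.card_fin, nsmul_eq_mul]
      rw [hsum, Real.norm_eq_abs, abs_of_nonneg (by positivity)]
    · exact bot_le
  -- convert to a real inequality
  have harg0 : 0 ≤ (m:ℝ)*u/a := by positivity
  have hreal : Ψ ((m:ℝ)*u/a) * (p/2)^m ≤ 1 := by
    have h1 : ENNReal.ofReal (Ψ ((m:ℝ)*u/a) * (p/2)^m) ≤ 1 := by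
      rw [ENNReal.ofReal_mul (hΨ.nonneg harg0), ENNReal.ofReal_pow (by positivity)]
      exact hlow
    exact (ENNReal.ofReal_le_one).1 h1
  have hfin : Ψ ((m:ℝ)*u/a) ≤ (2 * m * Ψ u)^m := by
    have hp2 : (0:ℝ) < (p/2)^m := by positivity
    have h1 : Ψ ((m:ℝ)*u/a) ≤ 1 / (p/2)^m := (le_div_iff₀ hp2).2 hreal
    have hbase : 2/p = 2 * (m:ℝ) * Ψ u := by
      rw [hp_def]; field_simp
    have h2 : 1 / (p/2)^m = (2 * (m:ℝ) * Ψ u)^m := by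
      rw [one_div, ← inv_pow, inv_div, hbase]
    rw [h2] at h1
    exact h1
  -- monotonicity from a < R+1
  have hR1 : (0:ℝ) < R + 1 := by linarith
  have hmono : Ψ ((m:ℝ) * u / (R+1)) ≤ Ψ ((m:ℝ)*u/a) := by
    have hle : (m:ℝ)*u/(R+1) ≤ (m:ℝ)*u/a :=
      div_le_div_of_nonneg_left (by positivity) ha0 haR.le
    exact hΨ.mono (Set.mem_Ici.2 (by positivity)) (Set.mem_Ici.2 harg0) hle
  calc Ψ ((m:ℝ) * u / (|D| * (1/Ψ 1 + 1) + 1)) = Ψ ((m:ℝ)*u/(R+1)) := by rw [hR_def]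
    _ ≤ Ψ ((m:ℝ)*u/a) := hmono
    _ ≤ (2 * m * Ψ u)^m := hfin

lemma endgame {Ψ : ℝ → ℝ} (hΨ : IsOrlicz Ψ) (D : ℝ)
    (hkey : ∀ (m : ℕ), 1 ≤ m → ∀ (u : ℝ), 1 ≤ u → 1 ≤ Ψ u →
      Ψ (m * u / (|D| * (1/Ψ 1 + 1) + 1)) ≤ (2 * m * Ψ u)^m) :
    HJCond Ψ := by
  have hΨ10 : 0 < Ψ 1 := hΨ.one_pos
  set R1 : ℝ := |D| * (1/Ψ 1 + 1) + 1 with hR1_def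
  have hR1 : 1 ≤ R1 := by
    have h0 : 0 ≤ |D| * (1/Ψ 1 + 1) := by positivity
    rw [hR1_def]; linarith
  set c₄ : ℝ := max 0 (Real.log (2*(R1+1))) with hc₄_def
  have hc₄0 : 0 ≤ c₄ := le_max_left _ _
  set K : ℝ := max (max 2 (1/Ψ 1)) (1 + (R1+1)*(1+c₄)) with hK_def
  have hK2 : (2:ℝ) ≤ K := le_trans (le_max_left _ _) (le_max_left _ _)
  have hKΨ : 1/Ψ 1 ≤ K := le_trans (le_max_right _ _) (le_max_left _ _)
  have hKc : 1 + (R1+1)*(1+c₄) ≤ K := le_max_right _ _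
  have hKR : R1 + 1 ≤ K := by nlinarith
  refine ⟨K, by linarith, ?_⟩
  intro s u hs hu
  have hs2 : (2:ℝ) ≤ s := le_trans hK2 hs
  have hu1 : (1:ℝ) ≤ u := by linarith [le_trans hK2 hu]
  have hΨu : 1 ≤ Ψ u := by
    have h1 : Ψ 1 * u ≤ Ψ u := hΨ.lin_le hu1
    have h2 : 1/Ψ 1 ≤ u := le_trans hKΨ hu
    have h3 : 1 = Ψ 1 * (1/Ψ 1) := by field_simp
    nlinarith
  have hΨu0 : (0:ℝ) < Ψ u := by linarith
  set m : ℕ := ⌈R1 * s⌉₊ with hm_def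
  have hR1s : (1:ℝ) ≤ R1 * s := by nlinarith
  have hm1 : 1 ≤ m := Nat.one_le_ceil_iff.2 (by linarith)
  have hm1' : (1:ℝ) ≤ (m:ℝ) := by exact_mod_cast hm1
  have hmlb : R1 * s ≤ (m:ℝ) := Nat.le_ceil _
  have hmub : (m:ℝ) ≤ (R1+1) * s := by
    have := Nat.ceil_lt_add_one (by positivity : (0:ℝ) ≤ R1 * s)
    nlinarith
  have hconc := hkey m hm1 u hu1 hΨu
  have hsu : s * u ≤ (m:ℝ) * u / R1 := by
    rw [le_div_iff₀ (by linarith : (0:ℝ) < R1)]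
    nlinarith
  have hmono : Ψ (s*u) ≤ Ψ ((m:ℝ) * u / R1) :=
    hΨ.mono (Set.mem_Ici.2 (by positivity)) (Set.mem_Ici.2 (by positivity)) hsu
  have hbase1 : (1:ℝ) ≤ 2 * (m:ℝ) * Ψ u := by nlinarith
  have hpow1 : (1:ℝ) ≤ (2 * (m:ℝ) * Ψ u)^m := one_le_pow₀ hbase1
  have hΨsu0 : 0 ≤ Ψ (s*u) := hΨ.nonneg (by positivity)
  set L : ℝ := Real.log (1+s) with hL_def
  set E : ℝ := orliczExp Ψ u with hE_def
  set M2 : ℝ := Real.log (2*(m:ℝ)) with hM2_def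
  have hψchain : orliczExp Ψ (s*u) ≤ Real.log 2 + (m:ℝ) * Real.log (2*(m:ℝ)*Ψ u) := by
    rw [orliczExp]
    have h1 : 1 + Ψ (s*u) ≤ 2 * (2*(m:ℝ)*Ψ u)^m := by nlinarith
    have h2 : (0:ℝ) < 1 + Ψ (s*u) := by linarith
    calc Real.log (1 + Ψ (s*u)) ≤ Real.log (2 * (2*(m:ℝ)*Ψ u)^m) :=
          Real.log_le_log h2 h1
      _ = Real.log 2 + (m:ℝ) * Real.log (2*(m:ℝ)*Ψ u) := by
          rw [Real.log_mul (by norm_num) (by positivity), Real.log_pow]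
  have hlog1 : Real.log (2*(m:ℝ)*Ψ u) = M2 + Real.log (Ψ u) :=
    Real.log_mul (by positivity) (ne_of_gt hΨu0)
  have hlogΨ : Real.log (Ψ u) ≤ E := by
    rw [hE_def, orliczExp]
    exact Real.log_le_log hΨu0 (by linarith)
  have hE0 : 0 ≤ E := Real.log_nonneg (by linarith)
  have hM20 : 0 ≤ M2 := Real.log_nonneg (by linarith)
  have hlog2m : M2 ≤ c₄ + L := by
    have h1 : M2 ≤ Real.log (2*(R1+1)*s) :=
      Real.log_le_log (by positivity) (by nlinarith)
    have h2 : Real.log (2*(R1+1)*s) = Real.log (2*(R1+1)) + Real.log s :=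
      Real.log_mul (by positivity) (by linarith)
    have h3 : Real.log s ≤ L := Real.log_le_log (by linarith) (by linarith)
    have h4 : Real.log (2*(R1+1)) ≤ c₄ := le_max_right _ _
    linarith
  have hL1 : (1:ℝ) ≤ L := by
    have h5 : Real.exp 1 < 3 := by linarith [Real.exp_one_lt_d9]
    calc (1:ℝ) = Real.log (Real.exp 1) := (Real.log_exp 1).symm
      _ ≤ L := Real.log_le_log (Real.exp_pos 1) (by linarith)
  have hlog2 : Real.log 2 ≤ 1 := by
    linarith [Real.log_le_sub_one_of_pos (by norm_num : (0:ℝ) < 2)]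
  -- assemble
  have step1 : orliczExp Ψ (s*u) ≤ Real.log 2 + (m:ℝ) * M2 + (m:ℝ) * E := by
    have : (m:ℝ) * Real.log (2*(m:ℝ)*Ψ u) ≤ (m:ℝ) * M2 + (m:ℝ) * E := by
      rw [hlog1]
      nlinarith
    linarith
  have step2 : (m:ℝ) * M2 ≤ (R1+1) * (1+c₄) * (s * L) := by
    have h1 : (m:ℝ) * M2 ≤ ((R1+1)*s) * M2 :=
      mul_le_mul_of_nonneg_right hmub hM20
    have h2 : M2 ≤ (1+c₄) * L := by nlinarith
    nlinarith [mul_le_mul_of_nonneg_left h2 (by positivity : (0:ℝ) ≤ (R1+1)*s)]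
  have step3 : (m:ℝ) * E ≤ (R1+1) * (s * E) := by
    nlinarith [mul_le_mul_of_nonneg_right hmub hE0]
  have step4 : Real.log 2 ≤ s * L := by nlinarith
  have hsL0 : 0 ≤ s * L := by positivity
  have hsE0 : 0 ≤ s * E := by positivity
  calc orliczExp Ψ (s*u) ≤ Real.log 2 + (m:ℝ) * M2 + (m:ℝ) * E := step1
    _ ≤ s*L + (R1+1)*(1+c₄)*(s*L) + (R1+1)*(s*E) := by linarith
    _ = (1 + (R1+1)*(1+c₄))*(s*L) + (R1+1)*(s*E) := by ring
    _ ≤ K*(s*L) + K*(s*E) := by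
        have := mul_le_mul_of_nonneg_right hKc hsL0
        have := mul_le_mul_of_nonneg_right hKR hsE0
        linarith
    _ = K * (s * L + s * E) := by ring

/-- Necessity: if the Hoffmann–Jørgensen inequality holds (with constant `D`) for all
i.i.d., symmetric, bounded real random variables, then `Ψ` satisfies (HJ). -/
theorem stmt14 {Ψ : ℝ → ℝ} (hΨ : IsOrlicz Ψ) (D : ℝ)
    (hHJineq : ∀ (Ω : Type) (_ : MeasurableSpace Ω) (μ : Measure Ω),
      IsProbabilityMeasure μ →
      ∀ (N : ℕ) (X : Fin N → Ω → ℝ),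
        (∀ i, Measurable (X i)) →
        iIndepFun X μ →
        (∀ i j, IdentDistrib (X i) (X j) μ μ) →
        (∀ i, IdentDistrib (X i) (fun ω => -(X i ω)) μ μ) →
        (∃ B : ℝ, ∀ i ω, |X i ω| ≤ B) →
        orliczNorm μ Ψ (fun ω => ∑ i, X i ω) ≤
          D * ((∫ ω, |∑ i, X i ω| ∂μ) + orliczNorm μ Ψ (fun ω => ⨆ i, |X i ω|))) :
    HJCond Ψ :=
  endgame hΨ D (fun m hm u hu hΨu => key hΨ D hHJineq m hm u hu hΨu)
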